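/- For 0 < α₀ < π/2, an antiderivative of α ↦ cos(α₀)/(cos²(α)·√(1 − cos²(α₀)/cos²(α))) on (−α₀, α₀) is α ↦ arcsin(cot(α₀)·tan(α)). -/

import Mathlib

open Real

theorem stmt8 (α₀ : ℝ) (h0 : 0 < α₀) (h1 : α₀ < π / 2) :
    ∀ α ∈ Set.Ioo (-α₀) α₀,
      HasDerivAt (fun a => Real.arcsin (Real.cos α₀ / Real.sin α₀ * Real.tan a))
        (Real.cos α₀ /
          (Real.cos α ^ 2 * Real.sqrt (1 - Real.cos α₀ ^ 2 / Real.cos α ^ 2))) α := by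
  intro α hα
  have hπ := Real.pi_pos
  have hα1 : -(π/2) < α := by linarith [hα.1]
  have hα2 : α < π/2 := by linarith [hα.2]
  have hcα : 0 < Real.cos α := Real.cos_pos_of_mem_Ioo ⟨hα1, hα2⟩
  have hcα₀ : 0 < Real.cos α₀ := Real.cos_pos_of_mem_Ioo ⟨by linarith, h1⟩
  have hsα₀ : 0 < Real.sin α₀ := Real.sin_pos_of_pos_of_lt_pi h0 (by linarith)
  have habs : |α| < α₀ := abs_lt.2 ⟨hα.1, hα.2⟩
  have hcc : Real.cos α₀ < Real.cos α := by
    rw [← Real.cos_abs α]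
    exact Real.cos_lt_cos_of_nonneg_of_le_pi (abs_nonneg α) (by linarith) habs
  have hdiff : 0 < Real.cos α ^ 2 - Real.cos α₀ ^ 2 := by nlinarith
  set k := Real.cos α₀ / Real.sin α₀ with hk
  have hsin2 : Real.sin α ^ 2 = 1 - Real.cos α ^ 2 := Real.sin_sq α
  have key : 1 - (k * Real.tan α) ^ 2
      = (Real.cos α ^ 2 - Real.cos α₀ ^ 2) / (Real.sin α₀ ^ 2 * Real.cos α ^ 2) := by
    rw [hk, Real.tan_eq_sin_div_cos]
    have hs2 : Real.sin α₀ ^ 2 = 1 - Real.cos α₀ ^ 2 := Real.sin_sq α₀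
    field_simp
    linear_combination (Real.cos α ^ 2) * hs2 - (Real.cos α₀ ^ 2) * hsin2
  have hx2 : 0 < 1 - (k * Real.tan α) ^ 2 := by
    rw [key]; positivity
  have hne1 : k * Real.tan α ≠ 1 := by
    intro h; rw [h] at hx2; norm_num at hx2
  have hnem1 : k * Real.tan α ≠ -1 := by
    intro h; rw [h] at hx2; norm_num at hx2
  have htan : HasDerivAt (fun a => k * Real.tan a) (k * (1 / Real.cos α ^ 2)) α :=
    (Real.hasDerivAt_tan hcα.ne').const_mul k
  have harcsin := (Real.hasDerivAt_arcsin hnem1 hne1).comp α htan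
  convert harcsin using 1
  case e'_4 => rfl
  case e'_5 => rfl
  case e'_8 => rfl
  set D := Real.sqrt (Real.cos α ^ 2 - Real.cos α₀ ^ 2) with hD
  have hDpos : 0 < D := Real.sqrt_pos.2 hdiff
  have e1 : Real.sqrt (1 - Real.cos α₀ ^ 2 / Real.cos α ^ 2) = D / Real.cos α := by
    rw [show 1 - Real.cos α₀ ^ 2 / Real.cos α ^ 2
        = (Real.cos α ^ 2 - Real.cos α₀ ^ 2) / Real.cos α ^ 2 by field_simp,
      Real.sqrt_div hdiff.le, Real.sqrt_sq hcα.le]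
  have e2 : Real.sqrt (1 - (k * Real.tan α) ^ 2) = D / (Real.sin α₀ * Real.cos α) := by
    rw [key, Real.sqrt_div hdiff.le,
      show Real.sin α₀ ^ 2 * Real.cos α ^ 2 = (Real.sin α₀ * Real.cos α) ^ 2 by ring,
      Real.sqrt_sq (by positivity)]
  rw [e1, e2, hk]
  field_simp
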